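/- For every natural number n, the function v = g_n solves the singular Sturm–Liouville equation d/dz[ (4z−1)^{3/2} · v'(z) ] + n(n+2) · (√(4z−1)/(4z²)) · v(z) = 0 for all real z > 1/4; that is, for every z > 1/4, the derivative at z of the function w ↦ (4w−1)^{3/2}·g_n'(w) plus n(n+2)·(√(4z−1)/(4z²))·g_n(z) equals 0. -/

import Mathlib

/-- The G-polynomials: `G 0 z = 1`, `G 1 z = 1`, `G (n+2) z = G (n+1) z - z * G n z`. -/
noncomputable def G : ℕ → ℝ → ℝ
  | 0, _ => 1
  | 1, _ => 1
  | (n + 2), z => G (n + 1) z - z * G n z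

/-- The irrational functions `g n z = G n z / (√z)^n`. -/
noncomputable def g (n : ℕ) (z : ℝ) : ℝ := G n z / (Real.sqrt z) ^ n

/-- derivative sequence of G -/
noncomputable def D : ℕ → ℝ → ℝ
  | 0, _ => 0
  | 1, _ => 0
  | (n + 2), z => D (n + 1) z - G n z - z * D n z

/-- second derivative sequence of G -/
noncomputable def E : ℕ → ℝ → ℝ
  | 0, _ => 0
  | 1, _ => 0
  | (n + 2), z => E (n + 1) z - 2 * D n z - z * E n z

lemma hasDerivAt_G : ∀ n z, HasDerivAt (fun w => G n w) (D n z) z := by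
  have key : ∀ n, (∀ z, HasDerivAt (fun w => G n w) (D n z) z) ∧
      (∀ z, HasDerivAt (fun w => G (n+1) w) (D (n+1) z) z) := by
    intro n
    induction n with
    | zero =>
      constructor <;> intro z <;> simp [G, D] <;> exact hasDerivAt_const z 1
    | succ m ih =>
      refine ⟨ih.2, fun z => ?_⟩
      have h1 := ih.2 z
      have h0 := ih.1 z
      have : HasDerivAt (fun w => G (m+1) w - w * G m w)
          (D (m+1) z - (1 * G m z + z * D m z)) z :=
        h1.sub ((hasDerivAt_id z).mul h0)
      simpa [G, D] using this.congr_deriv (by ring)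
  exact fun n => (key n).1

lemma hasDerivAt_D : ∀ n z, HasDerivAt (fun w => D n w) (E n z) z := by
  have key : ∀ n, (∀ z, HasDerivAt (fun w => D n w) (E n z) z) ∧
      (∀ z, HasDerivAt (fun w => D (n+1) w) (E (n+1) z) z) := by
    intro n
    induction n with
    | zero =>
      constructor <;> intro z <;> simp [D, E] <;> exact hasDerivAt_const z 0
    | succ m ih =>
      refine ⟨ih.2, fun z => ?_⟩
      have h1 := ih.2 z
      have h0 := ih.1 z
      have hG := hasDerivAt_G m z
      have : HasDerivAt (fun w => D (m+1) w - G m w - w * D m w)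
          (E (m+1) z - D m z - (1 * D m z + z * E m z)) z :=
        (h1.sub hG).sub ((hasDerivAt_id z).mul h0)
      simpa [D, E] using this.congr_deriv (by ring)
  exact fun n => (key n).1

lemma rel (n : ℕ) (z : ℝ) :
    z * (4 * z - 1) * D n z
      = ((n : ℝ) + 1) * (G (n + 1) z - G n z) + 2 * n * z * G n z := by
  induction n using Nat.strong_induction_on with
  | _ n ih =>
    match n with
    | 0 => simp [G, D]
    | 1 => simp [G, D]; ring
    | (m + 2) =>
      have i0 := ih m (by omega)
      have i1 := ih (m + 1) (by omega)
      simp only [G, D] at *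
      push_cast at *
      linear_combination i1 - z * i0


lemma ode (n : ℕ) (z : ℝ) (hz : z ≠ 0) :
    z * (4 * z - 1) * E n z + ((6 - 4 * (n : ℝ)) * z + n) * D n z
      + (n : ℝ) * ((n : ℝ) - 1) * G n z = 0 := by
  induction n using Nat.strong_induction_on with
  | _ n ih =>
    match n with
    | 0 => simp [G, D, E]
    | 1 => simp [G, D, E]
    | (m + 2) =>
      have i0 := ih m (by omega)
      have i1 := ih (m + 1) (by omega)
      have r1 := rel (m + 1) z
      simp only [G, D, E] at *
      push_cast at *
      -- instead multiply goal by z.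
      have hmul : z * (z * (4 * z - 1) * (E (m+1) z - 2 * D m z - z * E m z)
          + ((6 - 4 * ((m:ℝ) + 2)) * z + ((m:ℝ) + 2)) * (D (m+1) z - G m z - z * D m z)
          + ((m:ℝ) + 2) * (((m:ℝ) + 2) - 1) * (G (m+1) z - z * G m z)) = 0 := by
        linear_combination z * i1 - z * z * i0 - r1
      have := mul_eq_zero.mp hmul
      tauto

lemma sqrt_pow_eq (n : ℕ) {x : ℝ} (hx : 0 < x) :
    (Real.sqrt x) ^ n = x ^ ((n : ℝ) / 2) := by
  rw [Real.sqrt_eq_rpow, ← Real.rpow_natCast (x ^ ((1:ℝ)/2)) n, ← Real.rpow_mul hx.le]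
  ring_nf

lemma g_eq (n : ℕ) {x : ℝ} (hx : 0 < x) :
    g n x = G n x * x ^ (-(n : ℝ) / 2) := by
  rw [g, sqrt_pow_eq n hx, div_eq_mul_inv, ← Real.rpow_neg hx.le, neg_div]

lemma hasDerivAt_g (n : ℕ) {w : ℝ} (hw : 0 < w) :
    HasDerivAt (g n)
      (D n w * w ^ (-(n : ℝ) / 2) + G n w * (-(n : ℝ) / 2 * w ^ (-(n : ℝ) / 2 - 1))) w := by
  have h1 : HasDerivAt (fun x : ℝ => G n x * x ^ (-(n : ℝ) / 2))
      (D n w * w ^ (-(n : ℝ) / 2) + G n w * (-(n : ℝ) / 2 * w ^ (-(n : ℝ) / 2 - 1))) w :=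
    (hasDerivAt_G n w).mul (Real.hasDerivAt_rpow_const (Or.inl hw.ne'))
  refine h1.congr_of_eventuallyEq ?_
  filter_upwards [isOpen_Ioi.mem_nhds hw] with x hx
  exact g_eq n hx


theorem stmt_14 (n : ℕ) (z : ℝ) (hz : 1 / 4 < z) :
    deriv (fun w : ℝ => (4 * w - 1) ^ (3 / 2 : ℝ) * deriv (g n) w) z +
      (n : ℝ) * ((n : ℝ) + 2) * (Real.sqrt (4 * z - 1) / (4 * z ^ 2)) * g n z = 0 := by
  have hz0 : 0 < z := by linarith
  have h4 : 0 < 4 * z - 1 := by linarith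
  have hev : (fun w : ℝ => (4 * w - 1) ^ (3 / 2 : ℝ) * deriv (g n) w)
      =ᶠ[nhds z] fun w => (4 * w - 1) ^ (3 / 2 : ℝ) *
        (D n w * w ^ (-(n : ℝ) / 2) + G n w * (-(n : ℝ) / 2 * w ^ (-(n : ℝ) / 2 - 1))) := by
    filter_upwards [isOpen_Ioi.mem_nhds hz0] with x hx
    rw [(hasDerivAt_g n hx).deriv]
  rw [hev.deriv_eq]
  have hlin : HasDerivAt (fun w : ℝ => 4 * w - 1) 4 z := by
    simpa using ((hasDerivAt_id z).const_mul 4).sub_const 1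
  have hA : HasDerivAt (fun w : ℝ => (4 * w - 1) ^ (3 / 2 : ℝ))
      (4 * (3 / 2 : ℝ) * (4 * z - 1) ^ ((3 / 2 : ℝ) - 1)) z :=
    hlin.rpow_const (Or.inl h4.ne')
  have hψ : HasDerivAt (fun w : ℝ =>
        D n w * w ^ (-(n : ℝ) / 2) + G n w * (-(n : ℝ) / 2 * w ^ (-(n : ℝ) / 2 - 1)))
      (E n z * z ^ (-(n : ℝ) / 2) + D n z * (-(n : ℝ) / 2 * z ^ (-(n : ℝ) / 2 - 1))
        + (D n z * (-(n : ℝ) / 2 * z ^ (-(n : ℝ) / 2 - 1))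
          + G n z * (-(n : ℝ) / 2 * ((-(n : ℝ) / 2 - 1) * z ^ (-(n : ℝ) / 2 - 1 - 1))))) z :=
    ((hasDerivAt_D n z).mul (Real.hasDerivAt_rpow_const (Or.inl hz0.ne'))).add
      ((hasDerivAt_G n z).mul
        ((Real.hasDerivAt_rpow_const (Or.inl hz0.ne')).const_mul (-(n : ℝ) / 2)))
  rw [(hA.fun_mul hψ).deriv, g_eq n hz0]
  have e1 : (4 * z - 1) ^ ((3 / 2 : ℝ) - 1) = (4 * z - 1) ^ ((1 : ℝ) / 2) := by norm_num
  have e2 : (4 * z - 1) ^ ((3 : ℝ) / 2) = (4 * z - 1) * (4 * z - 1) ^ ((1 : ℝ) / 2) := by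
    rw [show (3 : ℝ) / 2 = 1 + 1 / 2 by norm_num, Real.rpow_add h4, Real.rpow_one]
  have e3 : Real.sqrt (4 * z - 1) = (4 * z - 1) ^ ((1 : ℝ) / 2) := Real.sqrt_eq_rpow _
  have e4 : z ^ (-(n : ℝ) / 2 - 1) = z ^ (-(n : ℝ) / 2) / z := by
    rw [Real.rpow_sub hz0, Real.rpow_one]
  have e5 : z ^ (-(n : ℝ) / 2 - 1 - 1) = z ^ (-(n : ℝ) / 2) / z / z := by
    rw [Real.rpow_sub hz0, Real.rpow_sub hz0, Real.rpow_one]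
  rw [e1, e2, e3, e4, e5]
  set P : ℝ := (4 * z - 1) ^ ((1 : ℝ) / 2) with hP
  set Q : ℝ := z ^ (-(n : ℝ) / 2) with hQ
  have hO := ode n z hz0.ne'
  field_simp
  linear_combination (16 * z * P * Q) * hO
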